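/- Let M be a class of monomorphisms in a cotensored V-category B such that: (i) arbitrary class-indexed intersections of M-morphisms exist in B and lie in M; (ii) pullbacks of M-morphisms along arbitrary morphisms exist in B and lie in M; (iii) M is closed under composition; and (iv) M is closed under cotensors. Then (M^{↑V}, M) = (M^↑, M) is a V-factorization system on B. -/

import Mathlib

open CategoryTheory CategoryTheory.Limits CategoryTheory.MonoidalCategory

universe w v₁ v₂ v₃ v₄ u₁ u₂ u₃ u₄

namespace EnrichedFS

variable (V : Type u₁) [Category.{v₁} V] [MonoidalCategory V] [SymmetricCategory V]
  [MonoidalClosed V]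
variable (B : Type u₂) [Category.{v₂} B] [EnrichedOrdinaryCategory V B]

/-- `e` is `V`-orthogonal to `m`: the square of hom-objects
with top `B(A₂,m)`, left `B(e,X₁)`, right `B(e,X₂)`, bottom `B(A₁,m)`
is a pullback in `V`. -/
def VOrth {A₁ A₂ X₁ X₂ : B} (e : A₁ ⟶ A₂) (m : X₁ ⟶ X₂) : Prop :=
  IsPullback (eHomWhiskerLeft V A₂ m) (eHomWhiskerRight V e X₁)
    (eHomWhiskerRight V e X₂) (eHomWhiskerLeft V A₁ m)

/-- `H^{↓V}`: the class of morphisms to which every member of `H` is `V`-orthogonal. -/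
def vRlp (H : MorphismProperty B) : MorphismProperty B :=
  fun _ _ m => ∀ ⦃A₁ A₂ : B⦄ (e : A₁ ⟶ A₂), H e → VOrth V B e m

/-- `M^{↑V}`: the class of morphisms which are `V`-orthogonal to every member of `M`. -/
def vLlp (M : MorphismProperty B) : MorphismProperty B :=
  fun _ _ e => ∀ ⦃X₁ X₂ : B⦄ (m : X₁ ⟶ X₂), M m → VOrth V B e m

/-- ordinary orthogonality: unique diagonal fillers for every commutative square. -/
def OrdOrth {A₁ A₂ X₁ X₂ : B} (e : A₁ ⟶ A₂) (m : X₁ ⟶ X₂) : Prop :=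
  ∀ (u : A₁ ⟶ X₁) (v : A₂ ⟶ X₂), u ≫ m = e ≫ v →
    ∃! d : A₂ ⟶ X₁, e ≫ d = u ∧ d ≫ m = v

/-- `H^{↓}` (ordinary). -/
def ordRlp (H : MorphismProperty B) : MorphismProperty B :=
  fun _ _ m => ∀ ⦃A₁ A₂ : B⦄ (e : A₁ ⟶ A₂), H e → OrdOrth B e m

/-- `M^{↑}` (ordinary). -/
def ordLlp (M : MorphismProperty B) : MorphismProperty B :=
  fun _ _ e => ∀ ⦃X₁ X₂ : B⦄ (m : X₁ ⟶ X₂), M m → OrdOrth B e m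

/-- `(E,M)` is a `V`-prefactorization system: `E^{↓V} = M` and `M^{↑V} = E`. -/
def IsVPrefactorization (E M : MorphismProperty B) : Prop :=
  vRlp V B E = M ∧ vLlp V B M = E

/-- `(E,M)` is an ordinary prefactorization system. -/
def IsOrdPrefactorization (E M : MorphismProperty B) : Prop :=
  ordRlp B E = M ∧ ordLlp B M = E

/-- every morphism factors as a morphism in `E` followed by a morphism in `M`. -/
def FactorizationsExist (E M : MorphismProperty B) : Prop :=
  ∀ ⦃X Y : B⦄ (f : X ⟶ Y), ∃ (Z : B) (e : X ⟶ Z) (m : Z ⟶ Y), E e ∧ M m ∧ e ≫ m = f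

/-- `(E,M)` is a `V`-factorization system. -/
def IsVFactorizationSystem (E M : MorphismProperty B) : Prop :=
  IsVPrefactorization V B E M ∧ FactorizationsExist B E M

/-- `(E,M)` is an ordinary factorization system. -/
def IsOrdFactorizationSystem (E M : MorphismProperty B) : Prop :=
  IsOrdPrefactorization B E M ∧ FactorizationsExist B E M

/-- intersection of two classes of morphisms. -/
def interProp (M N : MorphismProperty B) : MorphismProperty B := fun _ _ f => M f ∧ N f

/-- `V`-monomorphisms. -/
def vMono : MorphismProperty B := fun _ _ m => ∀ A : B, Mono (eHomWhiskerLeft V A m)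

/-- `V`-epimorphisms. -/
def vEpi : MorphismProperty B := fun _ _ e => ∀ A : B, Mono (eHomWhiskerRight V e A)

/-- `V`-strong monomorphisms. -/
def vStrongMono : MorphismProperty B := fun _ _ m =>
  vMono V B m ∧ ∀ ⦃A₁ A₂ : B⦄ (e : A₁ ⟶ A₂), vEpi V B e → VOrth V B e m

/-- `V`-strong epimorphisms. -/
def vStrongEpi : MorphismProperty B := fun _ _ e =>
  vEpi V B e ∧ ∀ ⦃X₁ X₂ : B⦄ (m : X₁ ⟶ X₂), vMono V B m → VOrth V B e m

/-- ordinary monomorphisms, as a class. -/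
def ordMono : MorphismProperty B := fun _ _ m => Mono m

/-- ordinary epimorphisms, as a class. -/
def ordEpi : MorphismProperty B := fun _ _ e => Epi e

/-- ordinary strong monomorphisms. -/
def ordStrongMono : MorphismProperty B := fun _ _ m =>
  Mono m ∧ ∀ ⦃A₁ A₂ : B⦄ (e : A₁ ⟶ A₂), Epi e → OrdOrth B e m

/-- ordinary strong epimorphisms. -/
def ordStrongEpi : MorphismProperty B := fun _ _ e =>
  Epi e ∧ ∀ ⦃X₁ X₂ : B⦄ (m : X₁ ⟶ X₂), Mono m → OrdOrth B e m

/-- closure under composition with isomorphisms on either side. -/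
def ClosedUnderIsoComp (E : MorphismProperty B) : Prop :=
  (∀ ⦃X Y Z : B⦄ (e : X ⟶ Y) (i : Y ⟶ Z), E e → IsIso i → E (e ≫ i)) ∧
  (∀ ⦃X Y Z : B⦄ (i : X ⟶ Y) (e : Y ⟶ Z), IsIso i → E e → E (i ≫ e))

/-- a commutative square which is a `V`-pullback: it is sent to a pullback square
in `V` by every hom functor `B(A,-)`. -/
def IsVPullbackSq {P X Y Z : B} (p₁ : P ⟶ X) (p₂ : P ⟶ Y) (f : X ⟶ Z) (g : Y ⟶ Z) : Prop :=
  p₁ ≫ f = p₂ ≫ g ∧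
    ∀ A : B, IsPullback (eHomWhiskerLeft V A p₁) (eHomWhiskerLeft V A p₂)
      (eHomWhiskerLeft V A f) (eHomWhiskerLeft V A g)

/-- a commutative square which is a `V`-pushout: it is sent to a pullback square
in `V` by every hom functor `B(-,A)`. -/
def IsVPushoutSq {X Y₁ Y₂ Q : B} (f₁ : X ⟶ Y₁) (f₂ : X ⟶ Y₂) (i₁ : Y₁ ⟶ Q) (i₂ : Y₂ ⟶ Q) :
    Prop :=
  f₁ ≫ i₁ = f₂ ≫ i₂ ∧
    ∀ A : B, IsPullback (eHomWhiskerRight V i₁ A) (eHomWhiskerRight V i₂ A)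
      (eHomWhiskerRight V f₁ A) (eHomWhiskerRight V f₂ A)

/-- `B` has `V`-kernel pairs. -/
def HasVKernelPairs : Prop :=
  ∀ ⦃X Y : B⦄ (f : X ⟶ Y), ∃ (P : B) (p₁ p₂ : P ⟶ X), IsVPullbackSq V B p₁ p₂ f f

/-- `B` has `V`-cokernel pairs. -/
def HasVCokernelPairs : Prop :=
  ∀ ⦃X Y : B⦄ (f : X ⟶ Y), ∃ (Q : B) (i₁ i₂ : Y ⟶ Q), IsVPushoutSq V B f f i₁ i₂

/-- `m : P ⟶ C` is a `V`-fibre-product (`V`-wide-pullback) of the family `f i : X i ⟶ C`,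
with projections `π i`. -/
def IsVFibreProduct {ι : Type w} {C : B} {X : ι → B} (f : ∀ i, X i ⟶ C)
    {P : B} (m : P ⟶ C) (π : ∀ i, P ⟶ X i) : Prop :=
  (∀ i, π i ≫ f i = m) ∧
    ∀ (A : B) (Z : V) (z : Z ⟶ (A ⟶[V] C)) (zi : ∀ i, Z ⟶ (A ⟶[V] X i)),
      (∀ i, zi i ≫ eHomWhiskerLeft V A (f i) = z) →
        ∃! t : Z ⟶ (A ⟶[V] P), t ≫ eHomWhiskerLeft V A m = z ∧
          ∀ i, t ≫ eHomWhiskerLeft V A (π i) = zi i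

/-- `m : P ⟶ C` is an ordinary fibre product (wide pullback) of the family `f i : X i ⟶ C`. -/
def OrdIsFibreProduct {ι : Type w} {C : B} {X : ι → B} (f : ∀ i, X i ⟶ C)
    {P : B} (m : P ⟶ C) (π : ∀ i, P ⟶ X i) : Prop :=
  (∀ i, π i ≫ f i = m) ∧
    ∀ ⦃W' : B⦄ (z : W' ⟶ C) (zi : ∀ i, W' ⟶ X i), (∀ i, zi i ≫ f i = z) →
      ∃! t : W' ⟶ P, t ≫ m = z ∧ ∀ i, t ≫ π i = zi i

/-- a cone is a `V`-limit cone: it is sent to a limit cone in `V` by every `B(A,-)`. -/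
def IsVLimitCone {J : Type u₃} [Category.{v₃} J] {D : J ⥤ B} (c : Cone D) : Prop :=
  ∀ (A : B) (Z : V) (z : ∀ j : J, Z ⟶ (A ⟶[V] D.obj j)),
    (∀ ⦃j j' : J⦄ (φ : j ⟶ j'), z j ≫ eHomWhiskerLeft V A (D.map φ) = z j') →
      ∃! t : Z ⟶ (A ⟶[V] c.pt), ∀ j, t ≫ eHomWhiskerLeft V A (c.π.app j) = z j

/-- a cocone is a `V`-colimit cocone: it is sent to a limit cone in `V` by every `B(-,A)`. -/
def IsVColimitCocone {J : Type u₃} [Category.{v₃} J] {D : J ⥤ B} (c : Cocone D) : Prop :=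
  ∀ (A : B) (Z : V) (z : ∀ j : J, Z ⟶ (D.obj j ⟶[V] A)),
    (∀ ⦃j j' : J⦄ (φ : j ⟶ j'), z j' ≫ eHomWhiskerRight V (D.map φ) A = z j) →
      ∃! t : Z ⟶ (c.pt ⟶[V] A), ∀ j, t ≫ eHomWhiskerRight V (c.ι.app j) A = z j

/-- `B` has small `V`-limits. -/
def HasSmallVLimits : Prop :=
  ∀ (J : Type v₂) [SmallCategory J] (D : J ⥤ B), ∃ c : Cone D, IsVLimitCone V B c

/-- `B` has small `V`-colimits. -/
def HasSmallVColimits : Prop :=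
  ∀ (J : Type v₂) [SmallCategory J] (D : J ⥤ B), ∃ c : Cocone D, IsVColimitCocone V B c

/-- `B` has finite `V`-limits. -/
def HasFiniteVLimits : Prop :=
  ∀ (J : Type) [SmallCategory J] [FinCategory J] (D : J ⥤ B),
    ∃ c : Cone D, IsVLimitCone V B c

/-- `B` is well-powered with respect to the class `M`: every object has,
up to isomorphism, only a set of `M`-subobjects. -/
def WellPoweredWrt (M : MorphismProperty B) : Prop :=
  ∀ X : B, ∃ (ι : Type v₂) (Y : ι → B) (f : ∀ i, Y i ⟶ X), (∀ i, M (f i)) ∧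
    ∀ ⦃Z : B⦄ (g : Z ⟶ X), M g → ∃ (i : ι) (h : Z ≅ Y i), h.hom ≫ f i = g

/-- `B` is co-well-powered with respect to the class `E`. -/
def CoWellPoweredWrt (E : MorphismProperty B) : Prop :=
  ∀ X : B, ∃ (ι : Type v₂) (Y : ι → B) (f : ∀ i, X ⟶ Y i), (∀ i, E (f i)) ∧
    ∀ ⦃Z : B⦄ (g : X ⟶ Z), E g → ∃ (i : ι) (h : Y i ≅ Z), f i ≫ h.hom = g

/-- comparison morphism `B(T, X) ⟶ [v, B(A, X)]` in `V` induced by a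
unit `η : v ⟶ B(A, T)`, where `T` is a candidate tensor `v ⊗ A`. -/
def tensorComparison {v : V} {A T : B} (η : v ⟶ (A ⟶[V] T)) (X : B) :
    (T ⟶[V] X) ⟶ (ihom v).obj (A ⟶[V] X) :=
  MonoidalClosed.curry (eComp V A T X) ≫ (MonoidalClosed.pre η).app (A ⟶[V] X)

/-- `η : v ⟶ B(A,T)` exhibits `T` as a tensor `v ⊗ A` in the enriched sense. -/
def IsTensorUnit (v : V) (A T : B) (η : v ⟶ (A ⟶[V] T)) : Prop :=
  ∀ X : B, IsIso (tensorComparison V B η X)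

/-- `B` is tensored over `V`. -/
def Tensored : Prop :=
  ∀ (v : V) (A : B), ∃ (T : B) (η : v ⟶ (A ⟶[V] T)), IsTensorUnit V B v A T η

/-- `E` is closed under tensors: whenever tensors exist, `v ⊗ e` lies in `E` for `e ∈ E`. -/
def ClosedUnderTensors (E : MorphismProperty B) : Prop :=
  ∀ (v : V) ⦃A₁ A₂ : B⦄ (e : A₁ ⟶ A₂) {T₁ T₂ : B}
    (η₁ : v ⟶ (A₁ ⟶[V] T₁)) (η₂ : v ⟶ (A₂ ⟶[V] T₂)),
    IsTensorUnit V B v A₁ T₁ η₁ → IsTensorUnit V B v A₂ T₂ η₂ → E e →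
      ∀ t : T₁ ⟶ T₂, η₁ ≫ eHomWhiskerLeft V A₁ t = η₂ ≫ eHomWhiskerRight V e T₂ → E t

/-- comparison morphism `B(A, C) ⟶ [v, B(A, X)]` in `V` induced by a
counit `ε : v ⟶ B(C, X)`, where `C` is a candidate cotensor `[v, X]`. -/
def cotensorComparison {v : V} {C X : B} (ε : v ⟶ (C ⟶[V] X)) (A : B) :
    (A ⟶[V] C) ⟶ (ihom v).obj (A ⟶[V] X) :=
  MonoidalClosed.curry ((β_ (C ⟶[V] X) (A ⟶[V] C)).hom ≫ eComp V A C X) ≫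
    (MonoidalClosed.pre ε).app (A ⟶[V] X)

/-- `ε : v ⟶ B(C,X)` exhibits `C` as a cotensor `[v, X]` in the enriched sense. -/
def IsCotensorCounit (v : V) (X C : B) (ε : v ⟶ (C ⟶[V] X)) : Prop :=
  ∀ A : B, IsIso (cotensorComparison V B ε A)

/-- `B` is cotensored over `V`. -/
def Cotensored : Prop :=
  ∀ (v : V) (X : B), ∃ (C : B) (ε : v ⟶ (C ⟶[V] X)), IsCotensorCounit V B v X C ε

/-- `M` is closed under cotensors: `[v, m]` lies in `M` for `m ∈ M`. -/
def ClosedUnderCotensors (M : MorphismProperty B) : Prop :=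
  ∀ (v : V) ⦃X₁ X₂ : B⦄ (m : X₁ ⟶ X₂) {C₁ C₂ : B}
    (ε₁ : v ⟶ (C₁ ⟶[V] X₁)) (ε₂ : v ⟶ (C₂ ⟶[V] X₂)),
    IsCotensorCounit V B v X₁ C₁ ε₁ → IsCotensorCounit V B v X₂ C₂ ε₂ → M m →
      ∀ t : C₁ ⟶ C₂, ε₁ ≫ eHomWhiskerLeft V C₁ m = ε₂ ≫ eHomWhiskerRight V t X₂ → M t

/-- a `V`-functor from a `V`-category `J` to an enriched ordinary category `D`. -/
structure VFunctor (J : Type u₃) [EnrichedCategory V J]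
    (D : Type u₄) [Category.{v₄} D] [EnrichedOrdinaryCategory V D] where
  obj : J → D
  emap : ∀ X Y : J, (X ⟶[V] Y) ⟶ (obj X ⟶[V] obj Y)
  emap_id : ∀ X : J, eId V X ≫ emap X X = eId V (obj X)
  emap_comp : ∀ X Y Z : J,
    eComp V X Y Z ≫ emap X Z = (emap X Y ⊗ₘ emap Y Z) ≫ eComp V (obj X) (obj Y) (obj Z)

/-- the underlying action of a `V`-functor on ordinary morphisms. -/
def VFunctor.map' {J : Type u₃} [Category.{v₃} J] [EnrichedOrdinaryCategory V J]
    {D : Type u₄} [Category.{v₄} D] [EnrichedOrdinaryCategory V D]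
    (F : VFunctor V J D) {X Y : J} (f : X ⟶ Y) : F.obj X ⟶ F.obj Y :=
  (eHomEquiv V).symm (eHomEquiv V f ≫ F.emap X Y)

/-- a `V`-adjunction `F ⊣ G`, given by a `V`-natural isomorphism
`D(F A, X) ≅ A(A, G X)` of hom-objects. -/
structure VAdjunction {A : Type u₃} [Category.{v₃} A] [EnrichedOrdinaryCategory V A]
    {D : Type u₄} [Category.{v₄} D] [EnrichedOrdinaryCategory V D]
    (F : VFunctor V A D) (G : VFunctor V D A) where
  iso : ∀ (X : A) (Y : D), (F.obj X ⟶[V] Y) ≅ (X ⟶[V] G.obj Y)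
  nat_right : ∀ (X : A) (Y Y' : D),
    eComp V (F.obj X) Y Y' ≫ (iso X Y').hom =
      ((iso X Y).hom ⊗ₘ G.emap Y Y') ≫ eComp V X (G.obj Y) (G.obj Y')
  nat_left : ∀ (X X' : A) (Y : D),
    (F.emap X X' ▷ (F.obj X' ⟶[V] Y)) ≫ eComp V (F.obj X) (F.obj X') Y ≫ (iso X Y).hom =
      ((X ⟶[V] X') ◁ (iso X' Y).hom) ≫ eComp V X X' (G.obj Y)

/-- a `V`-functor `J → V` (a weight), presented by its uncurried action. -/
structure VWeight (J : Type u₃) [EnrichedCategory V J] where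
  obj : J → V
  act : ∀ j j' : J, obj j ⊗ (j ⟶[V] j') ⟶ obj j'
  act_id : ∀ j : J, (obj j ◁ eId V j) ≫ act j j = (ρ_ (obj j)).hom
  act_comp : ∀ j j' j'' : J,
    (α_ (obj j) (j ⟶[V] j') (j' ⟶[V] j'')).inv ≫ (act j j' ▷ (j' ⟶[V] j'')) ≫ act j' j'' =
      (obj j ◁ eComp V j j' j'') ≫ act j j''

/-- a `V`-natural transformation between `V`-functors. -/
structure VNatTrans {J : Type u₃} [EnrichedCategory V J]
    {D : Type u₄} [Category.{v₄} D] [EnrichedOrdinaryCategory V D]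
    (F G : VFunctor V J D) where
  app : ∀ j : J, F.obj j ⟶ G.obj j
  naturality : ∀ j j' : J,
    F.emap j j' ≫ eHomWhiskerLeft V (F.obj j) (app j') =
      G.emap j j' ≫ eHomWhiskerRight V (app j) (G.obj j')

/-- `cone` exhibits `L` as the `V`-enriched weighted (indexed) limit `[W, F]`. -/
structure IsWeightedLimit {J : Type u₃} [EnrichedCategory V J]
    {D : Type u₄} [Category.{v₄} D] [EnrichedOrdinaryCategory V D]
    (W : VWeight V J) (F : VFunctor V J D) (L : D)
    (cone : ∀ j : J, W.obj j ⟶ (L ⟶[V] F.obj j)) : Prop where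
  natural : ∀ j j' : J,
    W.act j j' ≫ cone j' =
      (cone j ▷ (j ⟶[V] j')) ≫ ((L ⟶[V] F.obj j) ◁ F.emap j j') ≫
        eComp V L (F.obj j) (F.obj j')
  universal : ∀ (A : D) (Z : V) (μ : ∀ j : J, Z ⊗ W.obj j ⟶ (A ⟶[V] F.obj j)),
    (∀ j j' : J,
      (Z ◁ W.act j j') ≫ μ j' =
        (α_ Z (W.obj j) (j ⟶[V] j')).inv ≫ (μ j ▷ (j ⟶[V] j')) ≫
          ((A ⟶[V] F.obj j) ◁ F.emap j j') ≫ eComp V A (F.obj j) (F.obj j')) →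
      ∃! t : Z ⟶ (A ⟶[V] L), ∀ j : J,
        (t ▷ W.obj j) ≫ ((A ⟶[V] L) ◁ cone j) ≫ eComp V A L (F.obj j) = μ j

/-- `B` is `V`-finitely-well-complete: it has finite `V`-limits and `V`-intersections
of arbitrary class-indexed families of `V`-strong monomorphisms. -/
def VFinitelyWellComplete : Prop :=
  HasFiniteVLimits V B ∧
    ∀ {ι : Type (max u₂ v₂)} {C : B} (X : ι → B) (f : ∀ i, X i ⟶ C),
      (∀ i, vStrongMono V B (f i)) →
        ∃ (P : B) (m : P ⟶ C) (π : ∀ i, P ⟶ X i), IsVFibreProduct V B f m π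

/-- `B` is finitely well-complete (ordinary sense): it has finite limits and
intersections of arbitrary class-indexed families of strong monomorphisms. -/
def OrdFinitelyWellComplete : Prop :=
  HasFiniteLimits B ∧
    ∀ {ι : Type (max u₂ v₂)} {C : B} (X : ι → B) (f : ∀ i, X i ⟶ C),
      (∀ i, ordStrongMono B (f i)) →
        ∃ (P : B) (m : P ⟶ C) (π : ∀ i, P ⟶ X i), OrdIsFibreProduct B f m π


section Aux

set_option linter.unusedSectionVars false

variable {V B}

lemma eHomEquiv_comp_left' {X Y Z : B} (f : X ⟶ Y) (g : Y ⟶ Z) :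
    eHomEquiv V (f ≫ g) = eHomEquiv V f ≫ eHomWhiskerLeft V X g := by
  rw [eHomEquiv_comp, eHomWhiskerLeft, MonoidalCategory.tensorHom_def,
    rightUnitor_inv_naturality_assoc, unitors_inv_equal]
  simp

lemma eHomEquiv_comp_right' {X Y Z : B} (f : X ⟶ Y) (g : Y ⟶ Z) :
    eHomEquiv V (f ≫ g) = eHomEquiv V g ≫ eHomWhiskerRight V f Z := by
  rw [eHomEquiv_comp, eHomWhiskerRight, tensorHom_def',
    leftUnitor_inv_naturality_assoc]
  simp

lemma eComp_whisker_middle (A : B) {C' C X : B} (t : C' ⟶ C) :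
    ((A ⟶[V] C') ◁ eHomWhiskerRight V t X) ≫ eComp V A C' X =
      (eHomWhiskerLeft V A t ▷ (C ⟶[V] X)) ≫ eComp V A C X := by
  dsimp [eHomWhiskerLeft, eHomWhiskerRight]
  rw [MonoidalCategory.whiskerLeft_comp_assoc, MonoidalCategory.whiskerLeft_comp_assoc,
    ← e_assoc, comp_whiskerRight_assoc, comp_whiskerRight_assoc,
    associator_inv_naturality_middle_assoc, triangle_assoc_comp_left_inv_assoc]

lemma uncurry_cotensorComparison {v : V} {C X : B} (ε : v ⟶ (C ⟶[V] X)) (A : B) :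
    MonoidalClosed.uncurry (cotensorComparison V B ε A) =
      (ε ▷ (A ⟶[V] C)) ≫ (β_ (C ⟶[V] X) (A ⟶[V] C)).hom ≫ eComp V A C X := by
  dsimp [cotensorComparison]
  rw [MonoidalClosed.uncurry_natural_left, MonoidalClosed.uncurry_pre,
    whisker_exchange_assoc, ← MonoidalClosed.uncurry_eq, MonoidalClosed.uncurry_curry]

lemma transpose_eq {v : V} {C X : B} (ε : v ⟶ (C ⟶[V] X)) {A : B} (f : A ⟶ C) :
    (ρ_ v).inv ≫ MonoidalClosed.uncurry (eHomEquiv V f ≫ cotensorComparison V B ε A) =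
      ε ≫ eHomWhiskerRight V f X := by
  rw [MonoidalClosed.uncurry_natural_left, uncurry_cotensorComparison]
  rw [whisker_exchange_assoc, ← rightUnitor_inv_naturality_assoc,
    BraidedCategory.braiding_naturality_right_assoc]
  dsimp [eHomWhiskerRight]
  have h : (ρ_ (C ⟶[V] X)).inv ≫ (β_ (C ⟶[V] X) (𝟙_ V)).hom = (λ_ (C ⟶[V] X)).inv := by
    rw [Iso.inv_comp_eq, ← braiding_leftUnitor_assoc (C := V), Iso.hom_inv_id, Category.comp_id]
  rw [reassoc_of% h]

/-- Equivalence `(𝟙 ⟶ [v,w]) ≃ (v ⟶ w)`. -/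
def unitIhomEquiv (v w : V) : (𝟙_ V ⟶ (ihom v).obj w) ≃ (v ⟶ w) where
  toFun g := (ρ_ v).inv ≫ MonoidalClosed.uncurry g
  invFun z := MonoidalClosed.curry ((ρ_ v).hom ≫ z)
  left_inv g := by
    conv_rhs => rw [← MonoidalClosed.curry_uncurry g]
    simp
  right_inv z := by simp [MonoidalClosed.uncurry_curry]

lemma transpose_bijective {v : V} {C X : B} {ε : v ⟶ (C ⟶[V] X)}
    (hε : IsCotensorCounit V B v X C ε) (A : B) :
    Function.Bijective (fun f : A ⟶ C => ε ≫ eHomWhiskerRight V f X) := by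
  have h : (fun f : A ⟶ C => ε ≫ eHomWhiskerRight V f X) =
      (unitIhomEquiv v (A ⟶[V] X)) ∘
        (fun g : 𝟙_ V ⟶ (A ⟶[V] C) => g ≫ cotensorComparison V B ε A) ∘
        (eHomEquiv V) := by
    funext f
    exact (transpose_eq ε f).symm
  rw [h]
  have : IsIso (cotensorComparison V B ε A) := hε A
  exact ((unitIhomEquiv v _).bijective.comp
    ((asIso (cotensorComparison V B ε A)).homToEquiv).bijective).comp (eHomEquiv V).bijective

lemma cotensorComparison_comp_whiskerRight {v : V} {C' C X : B} (ε : v ⟶ (C ⟶[V] X))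
    (t : C' ⟶ C) (A : B) :
    cotensorComparison V B (ε ≫ eHomWhiskerRight V t X) A =
      eHomWhiskerLeft V A t ≫ cotensorComparison V B ε A := by
  apply MonoidalClosed.uncurry_injective
  rw [MonoidalClosed.uncurry_natural_left, uncurry_cotensorComparison,
    uncurry_cotensorComparison, comp_whiskerRight_assoc,
    BraidedCategory.braiding_naturality_left_assoc, eComp_whisker_middle,
    whisker_exchange_assoc, BraidedCategory.braiding_naturality_right_assoc]

lemma isCotensorCounit_comp_iso {v : V} {X C C' : B} {ε : v ⟶ (C ⟶[V] X)}
    (hε : IsCotensorCounit V B v X C ε) (t : C' ⟶ C) (hti : IsIso t) :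
    IsCotensorCounit V B v X C' (ε ≫ eHomWhiskerRight V t X) := by
  intro A
  rw [cotensorComparison_comp_whiskerRight]
  have h1 : IsIso (eHomWhiskerLeft V A t) := by
    have h : eHomWhiskerLeft V A t = ((eHomFunctor V B).obj (Opposite.op A)).map t := rfl
    rw [h]
    exact ⟨⟨eHomWhiskerLeft V A (CategoryTheory.inv t),
      by show eHomWhiskerLeft V A t ≫ eHomWhiskerLeft V A (CategoryTheory.inv t) = 𝟙 _
         rw [← eHomWhiskerLeft_comp, IsIso.hom_inv_id, eHomWhiskerLeft_id],
      by show eHomWhiskerLeft V A (CategoryTheory.inv t) ≫ eHomWhiskerLeft V A t = 𝟙 _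
         rw [← eHomWhiskerLeft_comp, IsIso.inv_hom_id, eHomWhiskerLeft_id]⟩⟩
  have h2 := hε A
  exact IsIso.comp_isIso

lemma counit_unit_isIso {X C : B} {ε : 𝟙_ V ⟶ (C ⟶[V] X)}
    (hε : IsCotensorCounit V B (𝟙_ V) X C ε) :
    IsIso ((eHomEquiv V).symm ε : C ⟶ X) := by
  set c := (eHomEquiv V).symm ε with hcdef
  have key : ∀ (A : B), Function.Bijective (fun g : A ⟶ C => g ≫ c) := by
    intro A
    have h : (fun g : A ⟶ C => g ≫ c) =
        (eHomEquiv V).symm ∘ (fun g : A ⟶ C => ε ≫ eHomWhiskerRight V g X) := by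
      funext g
      simp only [Function.comp]
      apply (eHomEquiv V).injective
      rw [Equiv.apply_symm_apply, eHomEquiv_comp_right', hcdef, Equiv.apply_symm_apply]
    rw [h]
    exact (eHomEquiv V).symm.bijective.comp (transpose_bijective hε A)
  obtain ⟨c', hc'⟩ := (key X).2 (𝟙 X)
  dsimp only at hc'
  have h2 : c ≫ c' = 𝟙 C := by
    apply (key C).1
    show (c ≫ c') ≫ c = 𝟙 C ≫ c
    rw [Category.assoc, hc', Category.comp_id, Category.id_comp]
  exact ⟨⟨c', h2, hc'⟩⟩

lemma isCotensorCounit_unit_of_isIso (hc : Cotensored V B) {A X : B} (f : A ⟶ X)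
    (hfi : IsIso f) : IsCotensorCounit V B (𝟙_ V) X A (eHomEquiv V f) := by
  obtain ⟨C, ε, hε⟩ := hc (𝟙_ V) X
  have hci : IsIso ((eHomEquiv V).symm ε) := counit_unit_isIso hε
  obtain ⟨g, hg⟩ := (transpose_bijective hε A).2 (eHomEquiv V f)
  dsimp only at hg
  have hgc : g ≫ (eHomEquiv V).symm ε = f := by
    apply (eHomEquiv V).injective
    rw [eHomEquiv_comp_right', Equiv.apply_symm_apply, hg]
  have hgi : IsIso g := by
    have h : g = f ≫ CategoryTheory.inv ((eHomEquiv V).symm ε) := by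
      rw [← hgc, Category.assoc, IsIso.hom_inv_id, Category.comp_id]
    rw [h]
    infer_instance
  have h := isCotensorCounit_comp_iso hε g hgi
  rwa [hg] at h

lemma M_isoComp (hc : Cotensored V B) (M : MorphismProperty B)
    (hcot : ClosedUnderCotensors V B M)
    {A X₁ X₂ : B} (i : A ⟶ X₁) (hi : IsIso i) (m : X₁ ⟶ X₂) (hm : M m) : M (i ≫ m) := by
  have h1 := isCotensorCounit_unit_of_isIso hc i hi
  have h2 := isCotensorCounit_unit_of_isIso hc (𝟙 X₂) (by infer_instance)
  refine hcot (𝟙_ V) m (eHomEquiv V i) (eHomEquiv V (𝟙 X₂)) h1 h2 hm (i ≫ m) ?_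
  rw [← eHomEquiv_comp_left', ← eHomEquiv_comp_right', Category.comp_id]

lemma vOrth_ordOrth {A₁ A₂ X₁ X₂ : B} {e : A₁ ⟶ A₂} {m : X₁ ⟶ X₂}
    (h : VOrth V B e m) : OrdOrth B e m := by
  intro u v huv
  have w : eHomEquiv V v ≫ eHomWhiskerRight V e X₂ =
      eHomEquiv V u ≫ eHomWhiskerLeft V A₁ m := by
    rw [← eHomEquiv_comp_right', ← eHomEquiv_comp_left', huv]
  refine ⟨(eHomEquiv V).symm (h.lift (eHomEquiv V v) (eHomEquiv V u) w), ⟨?_, ?_⟩, ?_⟩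
  · apply (eHomEquiv V).injective
    rw [eHomEquiv_comp_right', Equiv.apply_symm_apply, h.lift_snd]
  · apply (eHomEquiv V).injective
    rw [eHomEquiv_comp_left', Equiv.apply_symm_apply, h.lift_fst]
  · intro d hd
    apply (eHomEquiv V).injective
    rw [Equiv.apply_symm_apply]
    apply h.hom_ext
    · rw [← eHomEquiv_comp_left', hd.2, h.lift_fst]
    · rw [← eHomEquiv_comp_right', hd.1, h.lift_snd]

lemma vOrth_of_ordOrth (hc : Cotensored V B) (M : MorphismProperty B)
    (hcot : ClosedUnderCotensors V B M)
    {A₁ A₂ : B} {e : A₁ ⟶ A₂} (he : ∀ ⦃X₁ X₂ : B⦄ (m : X₁ ⟶ X₂), M m → OrdOrth B e m)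
    {X₁ X₂ : B} (m : X₁ ⟶ X₂) (hm : M m) : VOrth V B e m := by
  have w : eHomWhiskerLeft V A₂ m ≫ eHomWhiskerRight V e X₂ =
      eHomWhiskerRight V e X₁ ≫ eHomWhiskerLeft V A₁ m := eHom_whisker_exchange V e m
  have key : ∀ s : PullbackCone (eHomWhiskerRight V e X₂) (eHomWhiskerLeft V A₁ m),
      ∃ l : s.pt ⟶ (A₂ ⟶[V] X₁),
        (l ≫ eHomWhiskerLeft V A₂ m = s.fst ∧ l ≫ eHomWhiskerRight V e X₁ = s.snd) ∧
        ∀ l' : s.pt ⟶ (A₂ ⟶[V] X₁),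
          l' ≫ eHomWhiskerLeft V A₂ m = s.fst → l' ≫ eHomWhiskerRight V e X₁ = s.snd →
            l' = l := by
    intro s
    obtain ⟨C₁, ε₁, hε₁⟩ := hc s.pt X₁
    obtain ⟨C₂, ε₂, hε₂⟩ := hc s.pt X₂
    obtain ⟨t, ht⟩ := (transpose_bijective hε₂ C₁).2 (ε₁ ≫ eHomWhiskerLeft V C₁ m)
    dsimp only at ht
    have hMt : M t := hcot s.pt m ε₁ ε₂ hε₁ hε₂ hm t ht.symm
    obtain ⟨v', hv'⟩ := (transpose_bijective hε₂ A₂).2 s.fst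
    obtain ⟨u', hu'⟩ := (transpose_bijective hε₁ A₁).2 s.snd
    dsimp only at hv' hu'
    have hsq : u' ≫ t = e ≫ v' := by
      apply (transpose_bijective hε₂ A₁).1
      show ε₂ ≫ eHomWhiskerRight V (u' ≫ t) X₂ = ε₂ ≫ eHomWhiskerRight V (e ≫ v') X₂
      rw [eHomWhiskerRight_comp, eHomWhiskerRight_comp, reassoc_of% ht, reassoc_of% hv',
        eHom_whisker_exchange, reassoc_of% hu', s.condition]
    obtain ⟨d, ⟨hd1, hd2⟩, hdu⟩ := he t hMt u' v' hsq
    refine ⟨ε₁ ≫ eHomWhiskerRight V d X₁, ⟨?_, ?_⟩, ?_⟩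
    · rw [Category.assoc, ← eHom_whisker_exchange, ← reassoc_of% ht,
        ← eHomWhiskerRight_comp, hd2, hv']
    · rw [Category.assoc, ← eHomWhiskerRight_comp, hd1, hu']
    · intro l hl1 hl2
      obtain ⟨d', hd'⟩ := (transpose_bijective hε₁ A₂).2 l
      dsimp only at hd'
      have e1 : e ≫ d' = u' := by
        apply (transpose_bijective hε₁ A₁).1
        show ε₁ ≫ eHomWhiskerRight V (e ≫ d') X₁ = ε₁ ≫ eHomWhiskerRight V u' X₁
        rw [eHomWhiskerRight_comp, reassoc_of% hd', hu']
        exact hl2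
      have e2 : d' ≫ t = v' := by
        apply (transpose_bijective hε₂ A₂).1
        show ε₂ ≫ eHomWhiskerRight V (d' ≫ t) X₂ = ε₂ ≫ eHomWhiskerRight V v' X₂
        rw [eHomWhiskerRight_comp, reassoc_of% ht, eHom_whisker_exchange,
          reassoc_of% hd', hv']
        exact hl1
      have hdd : d' = d := hdu d' ⟨e1, e2⟩
      rw [← hd', hdd]
  exact IsPullback.of_isLimit (PullbackCone.isLimitAux'
    (PullbackCone.mk (eHomWhiskerLeft V A₂ m) (eHomWhiskerRight V e X₁) w) (fun s =>
      ⟨(key s).choose, (key s).choose_spec.1.1, (key s).choose_spec.1.2,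
        fun {l'} h1 h2 => (key s).choose_spec.2 l' h1 h2⟩))

lemma factorizations (M : MorphismProperty B)
    (hmono : ∀ ⦃X Y : B⦄ (f : X ⟶ Y), M f → Mono f)
    (hint : ∀ {ι : Type (max u₂ v₂)} {C : B} (X : ι → B) (f : ∀ i, X i ⟶ C),
      (∀ i, M (f i)) → ∃ (P : B) (m : P ⟶ C) (π : ∀ i, P ⟶ X i),
        OrdIsFibreProduct B f m π ∧ M m)
    (hpb : ∀ ⦃X Z Q : B⦄ (m : X ⟶ Z) (g : Q ⟶ Z), M m →
      ∃ (P : B) (p : P ⟶ X) (f : P ⟶ Q), IsPullback p f m g ∧ M f)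
    (hcomp : ∀ ⦃X Y Z : B⦄ (f : X ⟶ Y) (g : Y ⟶ Z), M f → M g → M (f ≫ g))
    ⦃X Y : B⦄ (f : X ⟶ Y) :
    ∃ (Z : B) (e : X ⟶ Z) (mm : Z ⟶ Y), ordLlp B M e ∧ M mm ∧ e ≫ mm = f := by
  obtain ⟨P, mP, π, ⟨hπ, huniv⟩, hMP⟩ := hint
    (fun i : { p : Σ (Z : B), (Z ⟶ Y) × (X ⟶ Z) // M p.2.1 ∧ p.2.2 ≫ p.2.1 = f } => i.1.1)
    (fun i => i.1.2.1) (fun i => i.2.1)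
  obtain ⟨e, ⟨heM, heπ⟩, heu⟩ := huniv f (fun i => i.1.2.2) (fun i => i.2.2)
  refine ⟨P, e, mP, ?_, hMP, heM⟩
  intro X₁ X₂ m' hm' u v huv
  obtain ⟨P', p, n, hpb', hMn⟩ := hpb m' v hm'
  have hMnm : M (n ≫ mP) := hcomp n mP hMn hMP
  have hfac : hpb'.lift u e huv ≫ n ≫ mP = f := by
    rw [← Category.assoc, hpb'.lift_snd, heM]
  have hπ₀ := hπ ⟨⟨P', n ≫ mP, hpb'.lift u e huv⟩, hMnm, hfac⟩
  have hπe := heπ ⟨⟨P', n ≫ mP, hpb'.lift u e huv⟩, hMnm, hfac⟩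
  dsimp at hπ₀ hπe
  have hmonoP : Mono mP := hmono mP hMP
  have hn1 : π ⟨⟨P', n ≫ mP, hpb'.lift u e huv⟩, hMnm, hfac⟩ ≫ n = 𝟙 P := by
    have h := hπ₀
    rw [← Category.assoc] at h
    exact (cancel_mono mP).1 (by rw [h, Category.id_comp])
  have hmono' : Mono m' := hmono m' hm'
  refine ⟨π ⟨⟨P', n ≫ mP, hpb'.lift u e huv⟩, hMnm, hfac⟩ ≫ p, ⟨?_, ?_⟩, ?_⟩
  · rw [← Category.assoc, hπe, hpb'.lift_fst]
  · rw [Category.assoc, hpb'.w, ← Category.assoc, hn1, Category.id_comp]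
  · intro d' hd'
    apply (cancel_mono m').1
    rw [hd'.2, Category.assoc, hpb'.w, ← Category.assoc, hn1, Category.id_comp]

end Aux

/-- If `B` is cotensored and `M` is a class of monomorphisms satisfying the hypotheses
of CHK Lemma 3.1 and closed under cotensors, then `(M^{↑V}, M) = (M^↑, M)` is a
`V`-factorization system on `B`. -/
theorem stmt13 (hc : Cotensored V B) (M : MorphismProperty B)
    (hmono : ∀ ⦃X Y : B⦄ (f : X ⟶ Y), M f → Mono f)
    (hint : ∀ {ι : Type (max u₂ v₂)} {C : B} (X : ι → B) (f : ∀ i, X i ⟶ C),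
      (∀ i, M (f i)) → ∃ (P : B) (m : P ⟶ C) (π : ∀ i, P ⟶ X i),
        OrdIsFibreProduct B f m π ∧ M m)
    (hpb : ∀ ⦃X Z Q : B⦄ (m : X ⟶ Z) (g : Q ⟶ Z), M m →
      ∃ (P : B) (p : P ⟶ X) (f : P ⟶ Q), IsPullback p f m g ∧ M f)
    (hcomp : ∀ ⦃X Y Z : B⦄ (f : X ⟶ Y) (g : Y ⟶ Z), M f → M g → M (f ≫ g))
    (hcot : ClosedUnderCotensors V B M) :
    vLlp V B M = ordLlp B M ∧ IsVFactorizationSystem V B (vLlp V B M) M := by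
  have heq : vLlp V B M = ordLlp B M := by
    apply funext; intro A₁; apply funext; intro A₂; apply funext; intro e
    apply propext
    constructor
    · intro h X₁ X₂ m hm
      exact vOrth_ordOrth (h m hm)
    · intro h X₁ X₂ m hm
      exact vOrth_of_ordOrth hc M hcot h m hm
  have hfact : FactorizationsExist B (vLlp V B M) M := by
    intro X Y f
    obtain ⟨Z, e, mm, he, hM, hfac⟩ := factorizations M hmono @hint hpb hcomp f
    exact ⟨Z, e, mm, by rw [heq]; exact he, hM, hfac⟩
  refine ⟨heq, ⟨⟨?_, rfl⟩, hfact⟩⟩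
  apply funext; intro X₁; apply funext; intro X₂; apply funext; intro m
  apply propext
  constructor
  · intro hr
    obtain ⟨Z, e, mm, he, hM, hfac⟩ := hfact m
    have horth : OrdOrth B e m := vOrth_ordOrth (hr e he)
    obtain ⟨d, ⟨hd1, hd2⟩, _⟩ := horth (𝟙 X₁) mm (by rw [Category.id_comp, hfac])
    have hmm : Mono mm := hmono mm hM
    have hde : d ≫ e = 𝟙 Z := by
      apply (cancel_mono mm).1
      rw [Category.assoc, hfac, hd2, Category.id_comp]
    have hiso : IsIso e := ⟨⟨d, hd1, hde⟩⟩
    have h := M_isoComp hc M hcot e hiso mm hM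
    rwa [hfac] at h
  · intro hm A₁ A₂ e he
    exact he m hm

end EnrichedFS
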